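/- Let (W,S) be a Coxeter system with S finite such that for every proper subset I ⊊ S the standard parabolic subgroup W_I is finite. Then every infinite subset V ⊆ W is cofinal in the Bruhat order: for every σ ∈ W there exists v ∈ V with σ ≤ v. -/

import Mathlib

/-- The Bruhat order on a Coxeter group: `u ≤ w` iff some reduced word for `w`
has a sublist (subword) which is a reduced word for `u`. -/
def CoxeterSystem.bruhatLE {B W : Type*} [Group W] {M : CoxeterMatrix B}
    (cs : CoxeterSystem M W) (u w : W) : Prop :=
  ∃ ω : List B, cs.IsReduced ω ∧ cs.wordProd ω = w ∧
    ∃ ω' : List B, ω'.Sublist ω ∧ cs.IsReduced ω' ∧ cs.wordProd ω' = u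

section Aux

variable {B W : Type*} [Group W] {M : CoxeterMatrix B} (cs : CoxeterSystem M W)

lemma aux_exists_reduced_word (w : W) :
    ∃ ω : List B, ω.length = cs.length w ∧ w = cs.wordProd ω := by
  obtain ⟨ω, hω, rfl⟩ := cs.exists_isReduced w
  exact ⟨ω, hω.symm, rfl⟩

/-- A word whose letters all lie in `I` has product in the parabolic subgroup. -/
lemma aux_wordProd_mem_closure (I : Set B) :
    ∀ ω : List B, (∀ j ∈ ω, j ∈ I) → cs.wordProd ω ∈ Subgroup.closure (cs.simple '' I) := by
  intro ω
  induction ω with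
  | nil => intro _; rw [cs.wordProd_nil]; exact Subgroup.one_mem _
  | cons i t ih =>
    intro h
    rw [cs.wordProd_cons]
    exact Subgroup.mul_mem _
      (Subgroup.subset_closure ⟨i, h i (List.mem_cons_self), rfl⟩)
      (ih fun j hj => h j (List.mem_cons_of_mem i hj))

/-- Balls in the length function are finite when `B` is finite. -/
lemma aux_finite_ball [Finite B] (N : ℕ) : {w : W | cs.length w ≤ N}.Finite := by
  apply Set.Finite.subset (((List.finite_length_le B N).image cs.wordProd))
  intro w hw
  obtain ⟨ω, hlen, hprod⟩ := aux_exists_reduced_word cs w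
  exact ⟨ω, by simpa [hlen] using hw, hprod.symm⟩

/-- Split a list at the first occurrence of a member. -/
lemma aux_first_split {α : Type*} {i : α} :
    ∀ {l : List α}, i ∈ l → ∃ s t, l = s ++ i :: t ∧ i ∉ s := by
  intro l
  induction l with
  | nil => intro h; simp at h
  | cons a t ih =>
    intro h
    by_cases hai : a = i
    · exact ⟨[], t, by simp [hai], by simp⟩
    · have : i ∈ t := by
        rcases List.mem_cons.1 h with h' | h'
        · exact absurd h'.symm hai
        · exact h'
      obtain ⟨s', t', rfl, hsi⟩ := ih this
      exact ⟨a :: s', t', by simp, by simp only [List.mem_cons, not_or]; exact ⟨fun h => hai h.symm, hsi⟩⟩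

/-- Key lemma: all sufficiently long elements dominate `σ` in Bruhat order. -/
lemma aux_key [Finite B] (hpar : ∀ I : Set B, I ≠ Set.univ →
      ((Subgroup.closure (cs.simple '' I) : Subgroup W) : Set W).Finite) :
    ∀ n : ℕ, ∀ σ : W, cs.length σ = n →
      ∃ N : ℕ, ∀ w : W, N ≤ cs.length w → cs.bruhatLE σ w := by
  intro n
  induction n using Nat.strong_induction_on with
  | _ n ih =>
    intro σ hσ
    rcases Nat.eq_zero_or_pos n with hn | hn
    · -- σ = 1
      refine ⟨0, fun w _ => ?_⟩
      obtain ⟨ω, hred, hprod⟩ := cs.exists_reduced_word' w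
      have hσ1 : σ = 1 := cs.length_eq_zero_iff.1 (hn ▸ hσ)
      exact ⟨ω, hred, hprod.symm, [], List.nil_sublist ω, by simp [CoxeterSystem.IsReduced],
        by simp [hσ1]⟩
    · -- σ ≠ 1; take a reduced word i :: ρ for σ
      obtain ⟨ωσ, hlen, hprod⟩ := aux_exists_reduced_word cs σ
      match ωσ, hlen with
      | [], hlen => simp [hσ] at hlen; omega
      | i :: ρ, hlen =>
        have hρlen : ρ.length = n - 1 := by simp [hσ] at hlen; omega
        set σ' := cs.wordProd ρ with hσ'
        have hσeq : σ = cs.simple i * σ' := by rw [hprod, cs.wordProd_cons]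
        have hσ'le : cs.length σ' ≤ n - 1 := hρlen ▸ cs.length_wordProd_le ρ
        have hσ'ge : n ≤ 1 + cs.length σ' := by
          calc n = cs.length σ := hσ.symm
          _ ≤ cs.length (cs.simple i) + cs.length σ' := by
              rw [hσeq]; exact cs.length_mul_le _ _
          _ = 1 + cs.length σ' := by rw [cs.length_simple]
        have hσ'len : cs.length σ' = n - 1 := by omega
        -- the proper parabolic omitting i is finite
        have hne : ({i}ᶜ : Set B) ≠ Set.univ := by
          intro h
          have : i ∈ ({i}ᶜ : Set B) := h ▸ Set.mem_univ i
          simp at this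
        have hF : ((Subgroup.closure (cs.simple '' ({i}ᶜ : Set B)) : Subgroup W) : Set W).Finite :=
          hpar _ hne
        -- bound the length of elements of the parabolic
        obtain ⟨C, hC⟩ : ∃ C, ∀ x ∈ (Subgroup.closure (cs.simple '' ({i}ᶜ : Set B)) : Subgroup W),
            cs.length x ≤ C := by
          obtain ⟨C, hC⟩ := (hF.image cs.length).bddAbove
          exact ⟨C, fun x hx => hC ⟨x, hx, rfl⟩⟩
        obtain ⟨N', hN'⟩ := ih (n - 1) (by omega) σ' hσ'len
        refine ⟨C + N' + 2, fun w hw => ?_⟩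
        obtain ⟨ωw, hwlen, hwprod⟩ := aux_exists_reduced_word cs w
        -- i must occur in ωw
        have hiw : i ∈ ωw := by
          by_contra hni
          have : w ∈ Subgroup.closure (cs.simple '' ({i}ᶜ : Set B)) := by
            rw [hwprod]
            exact aux_wordProd_mem_closure cs _ ωw (fun j hj => by
              simp only [Set.mem_compl_iff, Set.mem_singleton_iff]
              rintro rfl; exact hni hj)
          have := hC w this
          omega
        obtain ⟨α, β, hsplit, hani⟩ := aux_first_split hiw
        have hwfact : w = cs.wordProd α * (cs.simple i * cs.wordProd β) := by
          rw [hwprod, hsplit, cs.wordProd_append, cs.wordProd_cons]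
        have hlensum : cs.length w = α.length + 1 + β.length := by
          rw [← hwlen, hsplit]; simp; omega
        have h1 : cs.length w ≤
            cs.length (cs.wordProd α) + cs.length (cs.simple i * cs.wordProd β) := by
          rw [hwfact]; exact cs.length_mul_le _ _
        have h2 : cs.length (cs.simple i * cs.wordProd β) ≤ 1 + cs.length (cs.wordProd β) := by
          have := cs.length_mul_le (cs.simple i) (cs.wordProd β)
          rwa [cs.length_simple] at this
        have h3 : cs.length (cs.wordProd α) ≤ α.length := cs.length_wordProd_le α
        have h4 : cs.length (cs.wordProd β) ≤ β.length := cs.length_wordProd_le β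
        have hla : cs.length (cs.wordProd α) = α.length := by omega
        have hlb : cs.length (cs.wordProd β) = β.length := by omega
        -- α lies in the parabolic, so it is short
        have haF : cs.wordProd α ∈ Subgroup.closure (cs.simple '' ({i}ᶜ : Set B)) :=
          aux_wordProd_mem_closure cs _ α (fun j hj => by
            simp only [Set.mem_compl_iff, Set.mem_singleton_iff]
            rintro rfl; exact hani hj)
        have hαshort : α.length ≤ C := hla ▸ hC _ haF
        have hβlong : N' ≤ cs.length (cs.wordProd β) := by omega
        -- use inductive hypothesis on the product of β
        obtain ⟨ω₁, hω₁red, hω₁prod, τ, hτsub, hτred, hτprod⟩ := hN' (cs.wordProd β) hβlong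
        have hω₁len : ω₁.length = β.length := by
          rw [← hω₁red, hω₁prod, hlb]
        have hτlen : τ.length = n - 1 := by
          rw [← hτred, hτprod, hσ'len]
        have hprodeq : cs.wordProd (α ++ i :: ω₁) = w := by
          rw [cs.wordProd_append, cs.wordProd_cons, hω₁prod, ← hwfact]
        refine ⟨α ++ i :: ω₁, ?_, hprodeq, i :: τ, ?_, ?_, ?_⟩
        · show cs.length (cs.wordProd (α ++ i :: ω₁)) = _
          rw [hprodeq]
          simp only [List.length_append, List.length_cons]
          omega
        · exact (List.Sublist.cons₂ i hτsub).trans (List.sublist_append_right α (i :: ω₁))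
        · show cs.length (cs.wordProd (i :: τ)) = _
          rw [cs.wordProd_cons, hτprod, ← hσeq, hσ]
          simp only [List.length_cons]
          omega
        · rw [cs.wordProd_cons, hτprod, hσeq]

end Aux

/-- If every proper standard parabolic subgroup of a Coxeter system (with finitely
many generators) is finite, then every infinite subset is cofinal in the Bruhat order. -/
theorem infinite_subset_cofinal_in_bruhat
    {B W : Type*} [Group W] [Finite B] {M : CoxeterMatrix B} (cs : CoxeterSystem M W)
    (hpar : ∀ I : Set B, I ≠ Set.univ →
      ((Subgroup.closure (cs.simple '' I) : Subgroup W) : Set W).Finite)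
    (V : Set W) (hV : V.Infinite) (σ : W) :
    ∃ v ∈ V, cs.bruhatLE σ v := by
  obtain ⟨N, hN⟩ := aux_key cs hpar (cs.length σ) σ rfl
  have hball : {w : W | cs.length w ≤ N}.Finite := aux_finite_ball cs N
  obtain ⟨v, hvV, hvball⟩ := (hV.diff hball).nonempty
  exact ⟨v, hvV, hN v (by simpa using Nat.lt_of_not_le (by simpa using hvball) |>.le)⟩
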